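/- Let L/F be a Galois extension of number fields of degree n with rings of integers 𝒪_L, 𝒪_F, let 𝔭 be a prime ideal of 𝒪_F lying below a prime ideal 𝔓 of 𝒪_L with inertial degree f (i.e., ‖𝔓‖ = ‖𝔭‖^f). If γ ∈ 𝔭 \ 𝔭², then γ^i is not a norm from L to F for any i = 1, 2, ..., f−1. -/

import Mathlib

open NumberField

open Ideal UniqueFactorizationMonoid in
/-- For a nonzero prime `Q` of a Dedekind domain and nonzero ideal `I`, `I ≤ Q ^ count`
and `¬ I ≤ Q ^ (count + 1)`. -/
theorem aux_le_pow_count {R : Type*} [CommRing R] [IsDedekindDomain R] [DecidableEq (Ideal R)]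
    {Q I : Ideal R} (hQp : Q.IsPrime) (hQ0 : Q ≠ ⊥) (hI : I ≠ ⊥) :
    I ≤ Q ^ ((normalizedFactors I).count Q) ∧
      ¬ I ≤ Q ^ ((normalizedFactors I).count Q + 1) := by
  have hQirr : Irreducible Q := ((Ideal.prime_iff_isPrime hQ0).mpr hQp).irreducible
  have hem : emultiplicity Q I = ((normalizedFactors I).count Q : ℕ∞) := by
    simpa [normalize_eq] using emultiplicity_eq_count_normalizedFactors hQirr hI
  constructor
  · rw [← Ideal.dvd_iff_le]
    exact pow_dvd_of_le_emultiplicity (le_of_eq hem.symm)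
  · rw [← Ideal.dvd_iff_le]
    intro h
    have h2 := pow_dvd_iff_le_emultiplicity.mp h
    rw [hem, Nat.cast_le] at h2
    omega

open Ideal UniqueFactorizationMonoid in
theorem aux_count_map_equiv {S : Type*} [CommRing S] [IsDedekindDomain S] [DecidableEq (Ideal S)]
    (σ : S ≃+* S) {P : Ideal S} (hP : P.IsPrime) (hP0 : P ≠ ⊥) {I : Ideal S} (hI : I ≠ ⊥) :
    (normalizedFactors (Ideal.map σ I)).count P
      = (normalizedFactors I).count (Ideal.comap σ P) := by
  have hQp : (Ideal.comap σ P).IsPrime := hP.comap _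
  have hQ0 : Ideal.comap σ P ≠ ⊥ := by
    intro h
    apply hP0
    have h2 := Ideal.map_comap_of_surjective σ σ.surjective P
    rw [h, Ideal.map_bot] at h2
    exact h2.symm
  have key : ∀ j : ℕ, Ideal.map σ I ≤ P ^ j ↔ I ≤ (Ideal.comap σ P) ^ j := by
    intro j
    rw [Ideal.map_le_iff_le_comap, ← Ideal.map_symm, ← Ideal.map_symm, Ideal.map_pow]
  obtain ⟨h1, h2⟩ := aux_le_pow_count hQp hQ0 hI
  haveI := hP
  convert Ideal.count_normalizedFactors_eq ((key _).mpr h1) (fun h => h2 ((key _).mp h))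

open Ideal UniqueFactorizationMonoid in
theorem aux_count_finset_prod {R : Type*} [CommRing R] [IsDedekindDomain R]
    [DecidableEq (Ideal R)] {ι : Type*} (P : Ideal R) (s : Finset ι) (g : ι → Ideal R)
    (hg : ∀ i ∈ s, g i ≠ ⊥) :
    (normalizedFactors (∏ i ∈ s, g i)).count P = ∑ i ∈ s, (normalizedFactors (g i)).count P := by
  classical
  induction s using Finset.cons_induction with
  | empty => simp [← Ideal.one_eq_top, normalizedFactors_one]
  | cons a s ha ih =>
    have hprod : (∏ i ∈ s, g i) ≠ ⊥ := by
      rw [← Ideal.zero_eq_bot]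
      exact Finset.prod_ne_zero_iff.mpr (fun i hi => by
        rw [Ideal.zero_eq_bot]; exact hg i (Finset.mem_cons_of_mem hi))
    have ha0 : g a ≠ 0 := by rw [Ideal.zero_eq_bot]; exact hg a (Finset.mem_cons_self a s)
    rw [Finset.prod_cons, Finset.sum_cons,
      normalizedFactors_mul ha0 (by rw [Ideal.zero_eq_bot]; exact hprod),
      Multiset.count_add, ih (fun i hi => hg i (Finset.mem_cons_of_mem hi))]

open Ideal UniqueFactorizationMonoid in
theorem aux_count_pow {R : Type*} [CommRing R] [IsDedekindDomain R]
    [DecidableEq (Ideal R)] (P : Ideal R) (J : Ideal R) (hJ : J ≠ ⊥) (i : ℕ) :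
    (normalizedFactors (J ^ i)).count P = i * (normalizedFactors J).count P := by
  induction i with
  | zero => simp [← Ideal.one_eq_top, normalizedFactors_one]
  | succ k ih =>
    have hJ0 : J ≠ 0 := by rwa [Ideal.zero_eq_bot]
    have hJk : J ^ k ≠ 0 := pow_ne_zero _ hJ0
    rw [pow_succ, normalizedFactors_mul hJk hJ0, Multiset.count_add, ih]
    ring

open Ideal UniqueFactorizationMonoid in
theorem aux_count_map_algebraMap {R S : Type*} [CommRing R] [CommRing S]
    [IsDedekindDomain R] [IsDedekindDomain S] [Algebra R S]
    (hinj : Function.Injective (algebraMap R S))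
    [DecidableEq (Ideal R)] [DecidableEq (Ideal S)]
    {P : Ideal S} (hP : P.IsPrime) (hP0 : P ≠ ⊥)
    (J : Ideal R) :
    J ≠ ⊥ →
      (normalizedFactors (Ideal.map (algebraMap R S) J)).count P
        = Ideal.ramificationIdx' (Ideal.comap (algebraMap R S) P) P
          * (normalizedFactors J).count (Ideal.comap (algebraMap R S) P) := by
  set p : Ideal R := Ideal.comap (algebraMap R S) P with hpdef
  have hpprime : p.IsPrime := hP.comap _
  induction J using UniqueFactorizationMonoid.induction_on_prime with
  | h₁ => intro h; exact absurd Ideal.zero_eq_bot h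
  | h₂ u hu =>
    intro _
    rw [Ideal.isUnit_iff] at hu
    subst hu
    rw [Ideal.map_top, ← Ideal.one_eq_top, normalizedFactors_one]
    simp [← Ideal.one_eq_top, normalizedFactors_one]
  | h₃ a q ha hq ih =>
    intro _
    have hqP : q.IsPrime := Ideal.isPrime_of_prime hq
    have hq0 : q ≠ ⊥ := by rw [← Ideal.zero_eq_bot]; exact hq.ne_zero
    have ha' : a ≠ ⊥ := by rwa [← Ideal.zero_eq_bot]
    have hmapq : Ideal.map (algebraMap R S) q ≠ 0 := by
      rw [Ideal.zero_eq_bot, Ne, Ideal.map_eq_bot_iff_of_injective hinj]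
      exact hq0
    have hmapa : Ideal.map (algebraMap R S) a ≠ 0 := by
      rw [Ideal.zero_eq_bot, Ne, Ideal.map_eq_bot_iff_of_injective hinj]
      exact ha'
    have hnfq : normalizedFactors q = {q} := by
      rw [normalizedFactors_irreducible hq.irreducible, normalize_eq]
    rw [Ideal.map_mul, normalizedFactors_mul hmapq hmapa, Multiset.count_add,
      normalizedFactors_mul hq.ne_zero (by rwa [Ideal.zero_eq_bot]), Multiset.count_add,
      hnfq, ih ha']
    have hcountq : (normalizedFactors (Ideal.map (algebraMap R S) q)).count P
        = Ideal.ramificationIdx' p P * Multiset.count p {q} := by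
      by_cases hqp : q = p
      · subst hqp
        rw [Multiset.count_singleton_self, mul_one]
        convert (Ideal.IsDedekindDomain.ramificationIdx'_eq_normalizedFactors_count
          (by rwa [Ne, Ideal.map_eq_bot_iff_of_injective hinj]) hP hP0).symm
      · rw [Multiset.count_singleton, if_neg (by exact fun h => hqp h.symm), mul_zero]
        by_contra hne
        have hmem : P ∈ normalizedFactors (Ideal.map (algebraMap R S) q) :=
          Multiset.count_ne_zero.mp hne
        rw [Ideal.mem_normalizedFactors_iff (by rwa [Ne,
          Ideal.map_eq_bot_iff_of_injective hinj])] at hmem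
        have hle : q ≤ p := Ideal.map_le_iff_le_comap.mp hmem.2
        have hqmax : q.IsMaximal := hqP.isMaximal hq0
        exact hqp (hqmax.eq_of_le hpprime.ne_top hle)
    rw [hcountq]
    ring

theorem aux_span_prod {S : Type*} [CommRing S] {ι : Type*} (s : Finset ι) (x : ι → S) :
    Ideal.span {∏ i ∈ s, x i} = ∏ i ∈ s, Ideal.span {x i} := by
  classical
  induction s using Finset.cons_induction with
  | empty => simp [Ideal.one_eq_top]
  | cons a s ha ih =>
    rw [Finset.prod_cons, Finset.prod_cons, ← ih, Ideal.span_singleton_mul_span_singleton]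

open Ideal in
theorem aux_conj_exists (F L : Type*) [Field F] [Field L] [NumberField F] [NumberField L]
    [Algebra F L] [FiniteDimensional F L] [IsGalois F L]
    {P Q : Ideal (𝓞 L)} (hP : P.IsPrime) (hP0 : P ≠ ⊥) (hQ : Q.IsPrime) (hQ0 : Q ≠ ⊥)
    (hco : Ideal.comap (algebraMap (𝓞 F) (𝓞 L)) P = Ideal.comap (algebraMap (𝓞 F) (𝓞 L)) Q) :
    ∃ σ : L ≃ₐ[F] L, Ideal.comap (galRestrict (𝓞 F) F L (𝓞 L) σ) P = Q := by
  by_contra hcon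
  push_neg at hcon
  classical
  set gR := galRestrict (𝓞 F) F L (𝓞 L) with hgR
  have hprime : ∀ σ : L ≃ₐ[F] L, (Ideal.comap (gR σ) P).IsPrime := fun σ => hP.comap _
  have hQmax : Q.IsMaximal := hQ.isMaximal hQ0
  have hnotsub : ¬ (Q : Set (𝓞 L)) ⊆
      ⋃ σ ∈ (↑(Finset.univ : Finset (L ≃ₐ[F] L)) : Set (L ≃ₐ[F] L)),
        (Ideal.comap (gR σ) P : Set (𝓞 L)) := by
    rw [Ideal.subset_union_prime 1 1 (fun σ _ _ _ => hprime σ)]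
    rintro ⟨σ, -, hle⟩
    exact hcon σ (hQmax.eq_of_le (hprime σ).ne_top hle).symm
  obtain ⟨x, hxQ, hx0⟩ := Set.not_subset.mp hnotsub
  have hx : ∀ σ : L ≃ₐ[F] L, gR σ x ∉ P := by
    intro σ hmem
    exact hx0 (Set.mem_biUnion (Finset.mem_coe.mpr (Finset.mem_univ σ))
      (SetLike.mem_coe.mpr (Ideal.mem_comap.mpr hmem)))
  set y : 𝓞 L := ∏ σ : L ≃ₐ[F] L, gR σ x with hy
  have hyL : algebraMap (𝓞 L) L y = algebraMap F L (Algebra.norm F (algebraMap (𝓞 L) L x)) := by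
    rw [Algebra.norm_eq_prod_automorphisms, hy, map_prod]
    exact Finset.prod_congr rfl fun σ _ => algebraMap_galRestrict_apply _ σ x
  have hint : IsIntegral ℤ (Algebra.norm F (algebraMap (𝓞 L) L x)) := by
    rw [← isIntegral_algebraMap_iff (A := F) (B := L) (algebraMap F L).injective, ← hyL]
    exact RingOfIntegers.isIntegral_coe y
  obtain ⟨r, hr⟩ := IsIntegralClosure.isIntegral_iff (A := 𝓞 F).mp hint
  have hyr : y = algebraMap (𝓞 F) (𝓞 L) r := by
    apply IsFractionRing.injective (𝓞 L) L
    rw [hyL, ← hr, ← IsScalarTower.algebraMap_apply,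
      IsScalarTower.algebraMap_apply (𝓞 F) (𝓞 L) L]
  have hyQ : y ∈ Q := by
    obtain ⟨c, hc⟩ := Finset.dvd_prod_of_mem (fun σ => gR σ x) (Finset.mem_univ (1 : L ≃ₐ[F] L))
    rw [hy]
    rw [hc, map_one, AlgEquiv.one_apply]
    exact Ideal.mul_mem_right _ _ hxQ
  have hrp : r ∈ Ideal.comap (algebraMap (𝓞 F) (𝓞 L)) P := by
    rw [hco]
    exact Ideal.mem_comap.mpr (hyr ▸ hyQ)
  have hyP : y ∈ P := hyr ▸ Ideal.mem_comap.mp hrp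
  rw [hy] at hyP
  obtain ⟨σ, -, hσ⟩ := Ideal.IsPrime.prod_mem_iff.mp hyP
  exact hx σ hσ
set_option maxHeartbeats 1000000 in
set_option synthInstance.maxHeartbeats 400000 in
open Ideal UniqueFactorizationMonoid in
theorem non_norm_of_mem_prime_not_sq
    (F L : Type*) [Field F] [Field L] [NumberField F] [NumberField L]
    [Algebra F L] [FiniteDimensional F L] [IsGalois F L]
    (n : ℕ) (hn : Module.finrank F L = n)
    (P : Ideal (𝓞 L)) (hP : P.IsPrime)
    (p : Ideal (𝓞 F)) (hp : p = P.comap (algebraMap (𝓞 F) (𝓞 L)))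
    (f : ℕ) (hf : Ideal.absNorm P = Ideal.absNorm p ^ f)
    (γ : 𝓞 F) (hγ : γ ∈ p) (hγ2 : γ ∉ p ^ 2) :
    ∀ i : ℕ, 1 ≤ i → i ≤ f - 1 →
      ∀ ℓ : L, Algebra.norm F ℓ ≠ (algebraMap (𝓞 F) F γ) ^ i := by
  classical
  intro i hi1 hif ℓ hℓ
  have hf2 : 2 ≤ f := by omega
  have hγ0 : γ ≠ 0 := fun h => hγ2 (h ▸ (p ^ 2).zero_mem)
  have hp0 : p ≠ ⊥ := fun h => hγ0 (by simpa [h, Ideal.mem_bot] using hγ)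
  have hpprime : p.IsPrime := hp ▸ hP.comap _
  have hpmax : p.IsMaximal := hpprime.isMaximal hp0
  have habsp : 2 ≤ Ideal.absNorm p := by
    have h0 : Ideal.absNorm p ≠ 0 := by rw [Ne, Ideal.absNorm_eq_zero_iff]; exact hp0
    have h1 : Ideal.absNorm p ≠ 1 := by rw [Ne, Ideal.absNorm_eq_one_iff]; exact hpprime.ne_top
    omega
  have hP0 : P ≠ ⊥ := by
    intro h
    rw [h, Ideal.absNorm_bot] at hf
    have hpos : 0 < Ideal.absNorm p ^ f := pow_pos (by omega) f
    omega
  have hPmax : P.IsMaximal := hP.isMaximal hP0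
  -- injectivity of the various maps
  have hinjRL : Function.Injective (algebraMap (𝓞 F) L) := by
    rw [IsScalarTower.algebraMap_eq (𝓞 F) F L]
    exact (algebraMap F L).injective.comp (IsFractionRing.injective (𝓞 F) F)
  have hinj : Function.Injective (algebraMap (𝓞 F) (𝓞 L)) := by
    have h2 : Function.Injective
        (⇑(algebraMap (𝓞 L) L) ∘ ⇑(algebraMap (𝓞 F) (𝓞 L))) := by
      rw [← RingHom.coe_comp, ← IsScalarTower.algebraMap_eq]
      exact hinjRL
    exact Function.Injective.of_comp h2
  have hmapp0 : Ideal.map (algebraMap (𝓞 F) (𝓞 L)) p ≠ ⊥ := by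
    rw [Ne, Ideal.map_eq_bot_iff_of_injective hinj]
    exact hp0
  have hmaplep : Ideal.map (algebraMap (𝓞 F) (𝓞 L)) p ≤ P :=
    Ideal.map_le_iff_le_comap.mpr hp.le
  -- ramification index
  set e : ℕ := Ideal.ramificationIdx' p P with he
  have he0 : e ≠ 0 :=
    Ideal.IsDedekindDomain.ramificationIdx'_ne_zero hmapp0 hP hmaplep
  -- inertia degree equals f
  have hLO : P.LiesOver p := ⟨hp.symm ▸ rfl⟩
  have hfd : Ideal.inertiaDeg' p P = f := by
    have habs : Ideal.absNorm P
        = Ideal.absNorm p ^ Ideal.inertiaDeg' p P := by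
      rw [Ideal.inertiaDeg'_algebraMap]
      have hfinP : Finite ((𝓞 L) ⧸ P) := by
        rw [← Ideal.absNorm_ne_zero_iff]
        rw [Ne, Ideal.absNorm_eq_zero_iff]
        exact hP0
      have hfinp : Finite ((𝓞 F) ⧸ p) := by
        rw [← Ideal.absNorm_ne_zero_iff]
        rw [Ne, Ideal.absNorm_eq_zero_iff]
        exact hp0
      letI : Fintype ((𝓞 L) ⧸ P) := Fintype.ofFinite _
      letI : Fintype ((𝓞 F) ⧸ p) := Fintype.ofFinite _
      letI : Field ((𝓞 F) ⧸ p) := Ideal.Quotient.field p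
      rw [Ideal.absNorm_apply, Ideal.absNorm_apply, Submodule.cardQuot_apply,
        Submodule.cardQuot_apply, Nat.card_eq_fintype_card, Nat.card_eq_fintype_card]
      exact Module.card_eq_pow_finrank (K := (𝓞 F) ⧸ p) (V := (𝓞 L) ⧸ P)
    rw [habs] at hf
    exact Nat.pow_right_injective habsp hf
  -- write ℓ as a ratio of algebraic integers
  obtain ⟨a, b, hbmem, hab⟩ := IsFractionRing.div_surjective (A := 𝓞 L) ℓ
  have hb0 : b ≠ 0 := nonZeroDivisors.ne_zero hbmem
  have hbL0 : algebraMap (𝓞 L) L b ≠ 0 := fun h =>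
    hb0 (IsFractionRing.injective (𝓞 L) L (by rw [h, map_zero]))
  have hγF0 : (algebraMap (𝓞 F) F) γ ≠ 0 := fun h =>
    hγ0 (IsFractionRing.injective (𝓞 F) F (by rw [h, map_zero]))
  have hℓ0 : ℓ ≠ 0 := by
    intro h
    rw [h, Algebra.norm_zero] at hℓ
    exact (pow_ne_zero i hγF0) hℓ.symm
  have ha0 : a ≠ 0 := by
    intro h
    rw [h, map_zero, zero_div] at hab
    exact hℓ0 hab.symm
  have haL : algebraMap (𝓞 L) L a = ℓ * algebraMap (𝓞 L) L b := by
    rw [← hab, div_mul_cancel₀ _ hbL0]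
  have hnorm : Algebra.norm F (algebraMap (𝓞 L) L a)
      = (algebraMap (𝓞 F) F γ) ^ i * Algebra.norm F (algebraMap (𝓞 L) L b) := by
    rw [haL, _root_.map_mul, hℓ]
  set gR := galRestrict (𝓞 F) F L (𝓞 L) with hgR
  have hstar : (∏ σ : L ≃ₐ[F] L, gR σ a)
      = (algebraMap (𝓞 F) (𝓞 L) γ) ^ i * ∏ σ : L ≃ₐ[F] L, gR σ b := by
    apply IsFractionRing.injective (𝓞 L) L
    rw [_root_.map_mul, _root_.map_pow, _root_.map_prod, _root_.map_prod]
    rw [Finset.prod_congr rfl (fun σ _ => algebraMap_galRestrict_apply _ σ a),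
      Finset.prod_congr rfl (fun σ _ => algebraMap_galRestrict_apply _ σ b),
      ← Algebra.norm_eq_prod_automorphisms, ← Algebra.norm_eq_prod_automorphisms, hnorm,
      _root_.map_mul, _root_.map_pow]
    congr 2
  -- pass to ideal-counting
  set Φ : (L ≃ₐ[F] L) → Ideal (𝓞 L) := fun σ => Ideal.comap (gR σ) P with hΦ
  have hΦP : ∀ σ : L ≃ₐ[F] L, (Φ σ).IsPrime := fun σ => hP.comap _
  have hga0 : ∀ σ : L ≃ₐ[F] L, gR σ a ≠ 0 := fun σ h =>
    ha0 (by simpa using congrArg (gR σ).symm h)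
  have hgb0 : ∀ σ : L ≃ₐ[F] L, gR σ b ≠ 0 := fun σ h =>
    hb0 (by simpa using congrArg (gR σ).symm h)
  have hγS0 : algebraMap (𝓞 F) (𝓞 L) γ ≠ 0 := fun h => hγ0 (hinj (by rw [h, map_zero]))
  have hspan_equiv : ∀ (σ : L ≃ₐ[F] L) (x : 𝓞 L), x ≠ 0 →
      (normalizedFactors (Ideal.span {gR σ x})).count P
        = (normalizedFactors (Ideal.span {x})).count (Φ σ) := by
    intro σ x hx
    have hmapspan : Ideal.map ((gR σ).toRingEquiv) (Ideal.span {x}) = Ideal.span {gR σ x} := by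
      rw [Ideal.map_span, Set.image_singleton]
      rfl
    rw [← hmapspan, aux_count_map_equiv (gR σ).toRingEquiv hP hP0
      (by rw [Ne, Ideal.span_singleton_eq_bot]; exact hx)]
    rfl
  -- counting the two sides of hstar
  have hcount := congrArg
    (fun z : 𝓞 L => (normalizedFactors (Ideal.span {z})).count P) hstar
  beta_reduce at hcount
  have hLHS : (normalizedFactors (Ideal.span {∏ σ : L ≃ₐ[F] L, gR σ a})).count P
      = ∑ σ : L ≃ₐ[F] L, (normalizedFactors (Ideal.span {a})).count (Φ σ) := by
    rw [aux_span_prod, aux_count_finset_prod _ _ _ (fun σ _ => by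
      rw [Ne, Ideal.span_singleton_eq_bot]; exact hga0 σ)]
    exact Finset.sum_congr rfl fun σ _ => hspan_equiv σ a ha0
  have hγcount : (normalizedFactors (Ideal.span {algebraMap (𝓞 F) (𝓞 L) γ})).count P = e := by
    have hmapspan : Ideal.map (algebraMap (𝓞 F) (𝓞 L)) (Ideal.span {γ})
        = Ideal.span {algebraMap (𝓞 F) (𝓞 L) γ} := by
      rw [Ideal.map_span, Set.image_singleton]
    have hspanγ : Ideal.span {γ} ≠ (⊥ : Ideal (𝓞 F)) := by
      rw [Ne, Ideal.span_singleton_eq_bot]; exact hγ0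
    have hcount1 : (normalizedFactors (Ideal.span {γ})).count p = 1 := by
      haveI := hpprime
      refine Ideal.count_normalizedFactors_eq (n := 1) ?_ ?_
      · rw [pow_one]
        exact (Ideal.span_singleton_le_iff_mem _).mpr hγ
      · intro h
        exact hγ2 ((Ideal.span_singleton_le_iff_mem _).mp (by simpa using h))
    rw [← hmapspan, aux_count_map_algebraMap hinj hP hP0 _ hspanγ, ← hp, hcount1, mul_one]
  have hRHS : (normalizedFactors (Ideal.span
        {(algebraMap (𝓞 F) (𝓞 L) γ) ^ i * ∏ σ : L ≃ₐ[F] L, gR σ b})).count P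
      = i * e + ∑ σ : L ≃ₐ[F] L, (normalizedFactors (Ideal.span {b})).count (Φ σ) := by
    have h1 : Ideal.span ({(algebraMap (𝓞 F) (𝓞 L) γ) ^ i * ∏ σ : L ≃ₐ[F] L, gR σ b} :
          Set (𝓞 L))
        = Ideal.span {(algebraMap (𝓞 F) (𝓞 L) γ)} ^ i
            * Ideal.span {∏ σ : L ≃ₐ[F] L, gR σ b} := by
      rw [Ideal.span_singleton_pow, Ideal.span_singleton_mul_span_singleton]
    have h2 : Ideal.span ({∏ σ : L ≃ₐ[F] L, gR σ b} : Set (𝓞 L)) ≠ 0 := by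
      rw [Ideal.zero_eq_bot, Ne, Ideal.span_singleton_eq_bot]
      exact Finset.prod_ne_zero_iff.mpr fun σ _ => hgb0 σ
    have h3 : (Ideal.span {(algebraMap (𝓞 F) (𝓞 L) γ)} : Ideal (𝓞 L)) ^ i ≠ 0 := by
      apply pow_ne_zero
      rw [Ideal.zero_eq_bot, Ne, Ideal.span_singleton_eq_bot]
      exact hγS0
    rw [h1, normalizedFactors_mul h3 h2, Multiset.count_add,
      aux_count_pow _ _ (by rw [Ne, Ideal.span_singleton_eq_bot]; exact hγS0) i, hγcount,
      aux_span_prod, aux_count_finset_prod _ _ _ (fun σ _ => by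
        rw [Ne, Ideal.span_singleton_eq_bot]; exact hgb0 σ)]
    congr 1
    exact Finset.sum_congr rfl fun σ _ => hspan_equiv σ b hb0
  rw [hLHS, hRHS] at hcount
  -- hcount : ∑ σ, count (Φ σ) (nF span a) = i * e + ∑ σ, count (Φ σ) (nF span b)
  have hmul : ∀ σ τ : L ≃ₐ[F] L, Φ (σ * τ) = Ideal.comap (gR τ) (Φ σ) := by
    intro σ τ
    simp only [hΦ, _root_.map_mul]
    rfl
  have hΦ1 : Φ 1 = P := by
    simp only [hΦ, _root_.map_one]
    rfl
  have hcomm : ∀ σ : L ≃ₐ[F] L, Ideal.comap (algebraMap (𝓞 F) (𝓞 L)) (Φ σ) = p := by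
    intro σ
    rw [hp]
    ext x
    simp [hΦ, Ideal.mem_comap, AlgEquiv.commutes]
  set T := (factors (Ideal.map (algebraMap (𝓞 F) (𝓞 L)) p)).toFinset with hT
  have hTimage : Finset.univ.image Φ = T := by
    ext Q
    simp only [Finset.mem_image, Finset.mem_univ, true_and, hT, Multiset.mem_toFinset]
    rw [UniqueFactorizationMonoid.factors_eq_normalizedFactors,
      Ideal.mem_normalizedFactors_iff hmapp0]
    constructor
    · rintro ⟨σ, rfl⟩
      exact ⟨hΦP σ, Ideal.map_le_iff_le_comap.mpr (by rw [hcomm σ])⟩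
    · rintro ⟨hQp, hle⟩
      have hQ0 : Q ≠ ⊥ := by
        intro h
        rw [h] at hle
        exact hmapp0 (le_bot_iff.mp hle)
      have hcoQ : Ideal.comap (algebraMap (𝓞 F) (𝓞 L)) Q = p :=
        (hpmax.eq_of_le (hQp.comap _).ne_top (Ideal.map_le_iff_le_comap.mp hle)).symm
      obtain ⟨σ, hσ⟩ := aux_conj_exists F L hP hP0 hQp hQ0 (by rw [hcoQ, ← hp])
      exact ⟨σ, hσ⟩
  set c := (Finset.univ.filter fun σ : L ≃ₐ[F] L => Φ σ = P).card with hc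
  have hfib : ∀ Q ∈ Finset.univ.image Φ,
      (Finset.univ.filter fun σ : L ≃ₐ[F] L => Φ σ = Q).card = c := by
    intro Q hQ
    obtain ⟨τ, -, hτ⟩ := Finset.mem_image.mp hQ
    have hτinv : Ideal.comap (gR τ⁻¹) Q = P := by
      rw [← hτ, ← hmul, mul_inv_cancel, hΦ1]
    rw [hc]
    apply Finset.card_bij' (fun σ _ => σ * τ⁻¹) (fun σ _ => σ * τ)
    · intro σ hσ
      rw [Finset.mem_filter] at hσ ⊢
      exact ⟨Finset.mem_univ _, by rw [hmul, hσ.2, hτinv]⟩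
    · intro σ hσ
      rw [Finset.mem_filter] at hσ ⊢
      refine ⟨Finset.mem_univ _, by rw [hmul, hσ.2]; exact hτ⟩
    · intro σ _
      group
    · intro σ _
      group
  have hTne : T.Nonempty := by
    rw [← hTimage]
    exact ⟨P, Finset.mem_image.mpr ⟨1, Finset.mem_univ _, hΦ1⟩⟩
  -- the fundamental identity
  haveI := hpmax
  have hsum := Ideal.sum_ramification_inertia (𝓞 L) F L hp0
  have hconst : ∀ Q ∈ T, Ideal.ramificationIdx' p Q
      * Ideal.inertiaDeg' p Q = e * f := by
    intro Q hQ
    rw [← hTimage] at hQ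
    obtain ⟨σ, -, hσ⟩ := Finset.mem_image.mp hQ
    rw [← hσ]
    show Ideal.ramificationIdx' p (Ideal.comap (gR σ) P) * _ = _
    rw [Ideal.ramificationIdx'_comap_eq p (gR σ) P, Ideal.inertiaDeg'_comap_eq p (gR σ) P, hfd]
  have hef_sum : T.card * (e * f) = Module.finrank F L := by
    rw [← hsum, Finset.sum_congr rfl hconst, Finset.sum_const, smul_eq_mul]
  have hc_sum : c * T.card = Module.finrank F L := by
    rw [← IsGalois.card_aut_eq_finrank F L, Nat.card_eq_fintype_card, ← Finset.card_univ,
      Finset.card_eq_sum_card_image Φ Finset.univ, Finset.sum_congr rfl hfib,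
      Finset.sum_const, smul_eq_mul, hTimage, mul_comm]
  have hcef : c = e * f := by
    have hTc : T.card ≠ 0 := Finset.card_ne_zero_of_mem hTne.choose_spec
    have h1 : c * T.card = (e * f) * T.card := by
      rw [hc_sum, mul_comm (e*f) T.card, hef_sum]
    exact Nat.eq_of_mul_eq_mul_right (Nat.pos_of_ne_zero hTc) h1
  -- regroup the sums over the orbit
  have hgroup : ∀ x : 𝓞 L,
      (∑ σ : L ≃ₐ[F] L, (normalizedFactors (Ideal.span {x})).count (Φ σ))
        = c * ∑ Q ∈ T, (normalizedFactors (Ideal.span {x})).count Q := by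
    intro x
    rw [Finset.sum_comp (fun Q => (normalizedFactors (Ideal.span {x})).count Q) Φ]
    rw [Finset.sum_congr rfl (fun Q hQ => by rw [hfib Q hQ]), hTimage, ← Finset.smul_sum]
    simp [smul_eq_mul]
  rw [hgroup a, hgroup b, hcef] at hcount
  -- final arithmetic
  set A := ∑ Q ∈ T, (normalizedFactors (Ideal.span ({a} : Set (𝓞 L)))).count Q
  set B := ∑ Q ∈ T, (normalizedFactors (Ideal.span ({b} : Set (𝓞 L)))).count Q
  -- hcount : (e * f) * A = i * e + (e * f) * B
  have hkey : f * A = i + f * B := by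
    apply Nat.eq_of_mul_eq_mul_left (Nat.pos_of_ne_zero he0)
    calc e * (f * A) = e * f * A := by ring
    _ = i * e + e * f * B := hcount
    _ = e * (i + f * B) := by ring
  have hBA : B ≤ A := Nat.le_of_mul_le_mul_left (by rw [hkey]; exact Nat.le_add_left _ _) (by omega)
  obtain ⟨d, hd⟩ := Nat.exists_eq_add_of_le hBA
  rw [hd, Nat.mul_add] at hkey
  have hfd2 : i = f * d :=
    (Nat.add_left_cancel (hkey.trans (Nat.add_comm i (f * B)))).symm
  rcases Nat.eq_zero_or_pos d with h | h
  · rw [h, Nat.mul_zero] at hfd2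
    omega
  · have hfi : f ≤ i := by
      rw [hfd2]
      exact Nat.le_mul_of_pos_right f h
    omega
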